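/- Consider quadruples (s_1,s_3,s_5,s_7,v_2,v_4) with v_2 v_4 = s_1 s_5 − s_3 s_7 (Ptolemy–Plücker) and all quantities nonzero, including s_1 s_5 − s_3 s_7, s_1 s_3 − s_5 s_7, s_1 s_7 − s_3 s_5. Define the recutting map T(s_1,s_3,s_5,s_7,v_2,v_4) = (s_1,s_5,s_7,s_3, v_2·(s_1s_3−s_5s_7)/(s_1s_5−s_3s_7), v_4·(s_1s_7−s_3s_5)/(s_1s_3−s_5s_7)). Then the third iterate T³ returns the original data: T³(s_1,s_3,s_5,s_7,v_2,v_4) = (s_1,s_3,s_5,s_7,v_2,v_4), where at each step the s-entries are permuted as stated and the v-entries transform by the analogous formulas in the current s-entries. -/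

import Mathlib

/-- The quadrilateral recutting map on the coordinates `(s₁, s₃, s₅, s₇, v₂, v₄)`. -/
noncomputable def recutMap : ℝ × ℝ × ℝ × ℝ × ℝ × ℝ → ℝ × ℝ × ℝ × ℝ × ℝ × ℝ :=
  fun p =>
    match p with
    | (s₁, s₃, s₅, s₇, v₂, v₄) =>
      (s₁, s₅, s₇, s₃,
        v₂ * (s₁ * s₃ - s₅ * s₇) / (s₁ * s₅ - s₃ * s₇),
        v₄ * (s₁ * s₇ - s₃ * s₅) / (s₁ * s₃ - s₅ * s₇))

/-- the recutting map `T` preserves the Ptolemy–Plücker relation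
`v₂ v₄ = s₁ s₅ − s₃ s₇`, and its third iterate is the identity on the data
`(s₁, s₃, s₅, s₇, v₂, v₄)` (all quantities and intermediate denominators nonzero). -/
theorem stmt_19 (s₁ s₃ s₅ s₇ v₂ v₄ : ℝ)
    (h₁ : s₁ ≠ 0) (h₃ : s₃ ≠ 0) (h₅ : s₅ ≠ 0) (h₇ : s₇ ≠ 0)
    (hv₂ : v₂ ≠ 0) (hv₄ : v₄ ≠ 0)
    (hPl : v₂ * v₄ = s₁ * s₅ - s₃ * s₇)
    (hA : s₁ * s₅ - s₃ * s₇ ≠ 0) (hB : s₁ * s₃ - s₅ * s₇ ≠ 0)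
    (hC : s₁ * s₇ - s₃ * s₅ ≠ 0) :
    ((recutMap (s₁, s₃, s₅, s₇, v₂, v₄)).2.2.2.2.1
        * (recutMap (s₁, s₃, s₅, s₇, v₂, v₄)).2.2.2.2.2
      = (recutMap (s₁, s₃, s₅, s₇, v₂, v₄)).1
          * (recutMap (s₁, s₃, s₅, s₇, v₂, v₄)).2.2.1
        - (recutMap (s₁, s₃, s₅, s₇, v₂, v₄)).2.1
            * (recutMap (s₁, s₃, s₅, s₇, v₂, v₄)).2.2.2.1)
    ∧ recutMap (recutMap (recutMap (s₁, s₃, s₅, s₇, v₂, v₄))) = (s₁, s₃, s₅, s₇, v₂, v₄) := by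
  have hA' : s₁ * s₇ - s₅ * s₃ ≠ 0 := fun h => hC (by linarith)
  have hB' : s₁ * s₅ - s₇ * s₃ ≠ 0 := fun h => hA (by linarith)
  have hC' : s₁ * s₃ - s₇ * s₅ ≠ 0 := fun h => hB (by linarith)
  have hA'' : s₁ * s₃ - s₇ * s₅ ≠ 0 := hC'
  have hB'' : s₁ * s₇ - s₃ * s₅ ≠ 0 := hC
  refine ⟨?_, ?_⟩ <;> simp only [recutMap, Prod.mk.injEq]
  · field_simp
    linear_combination hPl
  · refine ⟨trivial, trivial, trivial, trivial, ?_, ?_⟩ <;> field_simp <;> ring
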